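/- Let θ₀ > 0 and θ₁,…,θ_{2m} > 0 with Σ_{i=1}^{m} θᵢ = Σ_{i=m+1}^{2m} θᵢ = m, and let 0 ≤ q < p ≤ 1 with θ₀θᵢp ≤ 1 for all i. Let X₁,…,X_{2m} be independent with Xᵢ ~ Bern(θ₀θᵢp) for i ≤ m and Xᵢ ~ Bern(θ₀θᵢq) for i > m. Then P(Σ_{i=1}^{m} Xᵢ < Σ_{i=m+1}^{2m} Xᵢ) ≤ exp(−θ₀ m (√p − √q)²). -/

import Mathlib

open MeasureTheory ProbabilityTheory Finset

lemma bern_exp_int {Ω : Type*} [MeasurableSpace Ω] (μ : Measure Ω) [IsProbabilityMeasure μ]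
    (X : Ω → ℝ) (hXm : Measurable X) (hX01 : ∀ ω, X ω = 0 ∨ X ω = 1) (c : ℝ) :
    Integrable (fun ω => Real.exp (c * X ω)) μ ∧
    ∫ ω, Real.exp (c * X ω) ∂μ = 1 + (Real.exp c - 1) * (μ {ω | X ω = 1}).toReal := by
  have hset : MeasurableSet {ω | X ω = 1} := hXm (measurableSet_singleton 1)
  have hXind : ∀ ω, X ω = Set.indicator {ω | X ω = 1} (fun _ => (1:ℝ)) ω := by
    intro ω
    rcases hX01 ω with h | h
    · rw [h, Set.indicator_of_notMem]
      simp [Set.mem_setOf_eq, h]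
    · rw [h]; exact (Set.indicator_of_mem h fun _ => (1:ℝ)).symm
  have hintX : Integrable X μ := by
    refine ((integrable_const (1:ℝ)).indicator hset).congr (ae_of_all _ fun ω => ?_)
    exact (hXind ω).symm
  have hiX : ∫ ω, X ω ∂μ = (μ {ω | X ω = 1}).toReal := by
    rw [integral_congr_ae (ae_of_all _ hXind), integral_indicator_const _ hset]
    simp
    rfl
  have hpt : ∀ ω, Real.exp (c * X ω) = 1 + (Real.exp c - 1) * X ω := by
    intro ω
    rcases hX01 ω with h | h
    · simp [h]
    · rw [h, mul_one, mul_one]; ring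
  constructor
  · refine ((integrable_const (1:ℝ)).add (hintX.const_mul (Real.exp c - 1))).congr
      (ae_of_all _ fun ω => ?_)
    exact (hpt ω).symm
  · rw [integral_congr_ae (ae_of_all _ hpt),
      integral_add (integrable_const 1) (hintX.const_mul _), integral_const,
      integral_const_mul, hiX]
    simp

theorem stmt_9
    {Ω : Type*} [MeasurableSpace Ω] (μ : Measure Ω) [IsProbabilityMeasure μ]
    (m : ℕ) (hm : 0 < m)
    (θ₀ : ℝ) (hθ₀ : 0 < θ₀)
    (θ : ℕ → ℝ) (hθ : ∀ i, i < 2 * m → 0 < θ i)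
    (p q : ℝ) (hq : 0 ≤ q) (hqp : q < p) (hp : p ≤ 1)
    (hbound : ∀ i, i < 2 * m → θ₀ * θ i * p ≤ 1)
    (hnorm1 : ∑ i ∈ range m, θ i = m)
    (hnorm2 : ∑ i ∈ Ico m (2 * m), θ i = m)
    (X : ℕ → Ω → ℝ) (hXmeas : ∀ i, Measurable (X i))
    (hX01 : ∀ i ω, X i ω = 0 ∨ X i ω = 1)
    (hindep : iIndepFun X μ)
    (hlaw1 : ∀ i, i < m → μ {ω | X i ω = 1} = ENNReal.ofReal (θ₀ * θ i * p))
    (hlaw2 : ∀ i, m ≤ i → i < 2 * m → μ {ω | X i ω = 1} = ENNReal.ofReal (θ₀ * θ i * q)) :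
    (μ {ω | ∑ i ∈ range m, X i ω < ∑ i ∈ Ico m (2 * m), X i ω}).toReal
      ≤ Real.exp (-(θ₀ * m * (Real.sqrt p - Real.sqrt q) ^ 2)) := by
  have hXnn : ∀ i ω, 0 ≤ X i ω := fun i ω => by rcases hX01 i ω with h | h <;> simp [h]
  rcases hq.eq_or_lt with hq0 | hq0
  · -- q = 0 : the second sum is 0 a.s.
    have h0 : μ {ω | ∑ i ∈ range m, X i ω < ∑ i ∈ Ico m (2 * m), X i ω} = 0 := by
      refine le_antisymm ?_ zero_le
      have hsub : {ω | ∑ i ∈ range m, X i ω < ∑ i ∈ Ico m (2 * m), X i ω}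
          ⊆ ⋃ i ∈ Ico m (2 * m), {ω | X i ω = 1} := by
        intro ω hω
        simp only [Set.mem_setOf_eq] at hω
        by_contra hc
        simp only [Set.mem_iUnion, Set.mem_setOf_eq, not_exists] at hc
        have hT : ∑ i ∈ Ico m (2 * m), X i ω = 0 := by
          refine Finset.sum_eq_zero fun i hi => ?_
          rcases hX01 i ω with h | h
          · exact h
          · exact absurd h (hc i hi)
        have hS : 0 ≤ ∑ i ∈ range m, X i ω := Finset.sum_nonneg fun i _ => hXnn i ω
        rw [hT] at hω; linarith
      calc μ _ ≤ μ (⋃ i ∈ Ico m (2 * m), {ω | X i ω = 1}) := measure_mono hsub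
        _ ≤ ∑ i ∈ Ico m (2 * m), μ {ω | X i ω = 1} := measure_biUnion_finset_le _ _
        _ = 0 := by
            refine Finset.sum_eq_zero fun i hi => ?_
            rw [hlaw2 i (mem_Ico.mp hi).1 (mem_Ico.mp hi).2, ← hq0]
            simp
    rw [h0]
    simpa using (Real.exp_pos _).le
  · -- q > 0
    have hppos : 0 < p := hq0.trans hqp
    set s := Real.sqrt p with hsdef
    set r := Real.sqrt q with hrdef
    have hspos : 0 < s := Real.sqrt_pos.mpr hppos
    have hrpos : 0 < r := Real.sqrt_pos.mpr hq0
    have hrs : r < s := Real.sqrt_lt_sqrt hq0.le hqp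
    have hs2 : s ^ 2 = p := Real.sq_sqrt hppos.le
    have hr2 : r ^ 2 = q := Real.sq_sqrt hq0.le
    set t := Real.log (s / r) with htdef
    have ht : 0 ≤ t := Real.log_nonneg ((one_le_div hrpos).mpr hrs.le)
    have het : Real.exp t = s / r := Real.exp_log (div_pos hspos hrpos)
    have hent : Real.exp (-t) = r / s := by
      rw [Real.exp_neg, het, inv_div]
    set c : ℕ → ℝ := fun i => if i < m then -1 else 1 with hcdef
    set Y : ℕ → Ω → ℝ := fun i ω => c i * X i ω with hYdef
    have hYmeas : ∀ i, Measurable (Y i) := fun i => (hXmeas i).const_mul _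
    have hYindep : iIndepFun Y μ :=
      hindep.comp (fun i x => c i * x) (fun i => measurable_const_mul _)
    -- per-coordinate mgf data
    have hbern := fun i => bern_exp_int μ (X i) (hXmeas i) (hX01 i) (t * c i)
    have hYint : ∀ i, Integrable (fun ω => Real.exp (t * Y i ω)) μ := by
      intro i
      refine (hbern i).1.congr (ae_of_all _ fun ω => ?_)
      simp [hYdef, mul_assoc]
    have hmgfY : ∀ i, mgf (Y i) μ t
        = 1 + (Real.exp (t * c i) - 1) * (μ {ω | X i ω = 1}).toReal := by
      intro i
      have : mgf (Y i) μ t = ∫ ω, Real.exp (t * Y i ω) ∂μ := rfl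
      rw [this, ← (hbern i).2]
      refine integral_congr_ae (ae_of_all _ fun ω => ?_)
      simp [hYdef, mul_assoc]
    -- probabilities
    have hprob : ∀ i, i < 2 * m → (μ {ω | X i ω = 1}).toReal
        = θ₀ * θ i * (if i < m then p else q) := by
      intro i hi
      by_cases him : i < m
      · rw [if_pos him, hlaw1 i him, ENNReal.toReal_ofReal]
        have := hθ i hi
        positivity
      · rw [if_neg him, hlaw2 i (Nat.le_of_not_lt him) hi, ENNReal.toReal_ofReal]
        have := hθ i hi
        positivity
    -- bound each mgf factor
    have hfac : ∀ i ∈ range (2 * m), mgf (Y i) μ t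
        ≤ Real.exp ((Real.exp (t * c i) - 1) * (θ₀ * θ i * (if i < m then p else q))) := by
      intro i hi
      rw [hmgfY i, hprob i (mem_range.mp hi)]
      have := Real.add_one_le_exp ((Real.exp (t * c i) - 1) * (θ₀ * θ i * (if i < m then p else q)))
      linarith
    -- split of sums over range (2m)
    have hsplit : ∀ f : ℕ → ℝ, ∑ i ∈ range (2 * m), f i
        = ∑ i ∈ range m, f i + ∑ i ∈ Ico m (2 * m), f i := by
      intro f
      rw [range_eq_Ico, range_eq_Ico]
      exact (Finset.sum_Ico_consecutive f (Nat.zero_le m) (by omega : m ≤ 2 * m)).symm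
    -- event inclusion
    have hevent : {ω | ∑ i ∈ range m, X i ω < ∑ i ∈ Ico m (2 * m), X i ω}
        ⊆ {ω | (0:ℝ) ≤ (∑ i ∈ range (2 * m), Y i) ω} := by
      intro ω hω
      simp only [Set.mem_setOf_eq] at hω ⊢
      rw [Finset.sum_apply, hsplit fun i => Y i ω]
      have h1 : ∑ i ∈ range m, Y i ω = -∑ i ∈ range m, X i ω := by
        rw [← Finset.sum_neg_distrib]
        refine Finset.sum_congr rfl fun i hi => ?_
        simp [hYdef, hcdef, mem_range.mp hi]
      have h2 : ∑ i ∈ Ico m (2 * m), Y i ω = ∑ i ∈ Ico m (2 * m), X i ω := by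
        refine Finset.sum_congr rfl fun i hi => ?_
        simp [hYdef, hcdef, Nat.not_lt.mpr (mem_Ico.mp hi).1]
      rw [h1, h2]; linarith
    have hZint : Integrable (fun ω => Real.exp (t * (∑ i ∈ range (2 * m), Y i) ω)) μ :=
      hYindep.integrable_exp_mul_sum hYmeas (fun i _ => hYint i)
    -- the two partial exponent sums
    have h1 : ∑ i ∈ range m, (Real.exp (t * c i) - 1) * (θ₀ * θ i * (if i < m then p else q))
        = (r / s - 1) * (θ₀ * p) * m := by
      rw [← hnorm1, Finset.mul_sum]
      refine Finset.sum_congr rfl fun i hi => ?_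
      have him := mem_range.mp hi
      simp only [hcdef, if_pos him]
      rw [show t * (-1:ℝ) = -t by ring, hent]
      ring
    have h2 : ∑ i ∈ Ico m (2 * m), (Real.exp (t * c i) - 1) * (θ₀ * θ i * (if i < m then p else q))
        = (s / r - 1) * (θ₀ * q) * m := by
      rw [← hnorm2, Finset.mul_sum]
      refine Finset.sum_congr rfl fun i hi => ?_
      have him := Nat.not_lt.mpr (mem_Ico.mp hi).1
      simp only [hcdef, if_neg him]
      rw [mul_one, het]
      ring
    have hkey : (r / s - 1) * (θ₀ * p) * ↑m + (s / r - 1) * (θ₀ * q) * ↑m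
        = -(θ₀ * ↑m * (s - r) ^ 2) := by
      rw [← hs2, ← hr2]
      field_simp
      ring
    calc (μ {ω | ∑ i ∈ range m, X i ω < ∑ i ∈ Ico m (2 * m), X i ω}).toReal
        ≤ (μ {ω | (0:ℝ) ≤ (∑ i ∈ range (2 * m), Y i) ω}).toReal :=
          ENNReal.toReal_mono (measure_ne_top μ _) (measure_mono hevent)
      _ ≤ Real.exp (-t * 0) * mgf (∑ i ∈ range (2 * m), Y i) μ t :=
          measure_ge_le_exp_mul_mgf 0 ht hZint
      _ = mgf (∑ i ∈ range (2 * m), Y i) μ t := by simp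
      _ = ∏ i ∈ range (2 * m), mgf (Y i) μ t := hYindep.mgf_sum hYmeas _
      _ ≤ ∏ i ∈ range (2 * m),
            Real.exp ((Real.exp (t * c i) - 1) * (θ₀ * θ i * (if i < m then p else q))) :=
          Finset.prod_le_prod (fun i _ => mgf_nonneg) hfac
      _ = Real.exp (∑ i ∈ range (2 * m),
            (Real.exp (t * c i) - 1) * (θ₀ * θ i * (if i < m then p else q))) :=
          (Real.exp_sum _ _).symm
      _ = Real.exp (-(θ₀ * ↑m * (s - r) ^ 2)) := by
          rw [hsplit, h1, h2, hkey]
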